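/- For every k ≥ 1 and every integer t with 2k - 1 ≤ t ≤ k(k+1)/2, there exists a set A ⊆ [0, 2^k - 1] of k integers with |2A| = t. Hence the set of possible sizes of 2-fold sumsets of k-element sets of integers is exactly the interval [2k-1, k(k+1)/2]. -/

import Mathlib

open Pointwise Finset

/-- The `h`-fold sumset of a finite set `A`. -/
def hfold {G : Type*} [AddCommMonoid G] [DecidableEq G] : ℕ → Finset G → Finset G
  | 0, _ => {0}
  | n + 1, A => hfold n A + A

/-- The `h`-fold restricted sumset of a finite set `A`: sums of `h` distinct elements. -/
def rfold {G : Type*} [AddCommMonoid G] [DecidableEq G] (h : ℕ) (A : Finset G) : Finset G :=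
  (A.powersetCard h).image (fun S => S.sum id)

lemma sumset_card_le (A : Finset ℤ) : (A + A).card ≤ A.card * (A.card + 1) / 2 := by
  classical
  set f : Sym2 ℤ → ℤ := Sym2.lift ⟨fun a b => a + b, fun a b => add_comm a b⟩ with hf
  have hsub : A + A ⊆ A.sym2.image f := by
    intro x hx
    obtain ⟨a, ha, b, hb, rfl⟩ := Finset.mem_add.1 hx
    exact Finset.mem_image.2 ⟨s(a, b), Finset.mk_mem_sym2_iff.2 ⟨ha, hb⟩, by simp [hf]⟩
  calc (A + A).card ≤ (A.sym2.image f).card := Finset.card_le_card hsub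
    _ ≤ A.sym2.card := Finset.card_image_le
    _ = (A.card + 1).choose 2 := Finset.card_sym2 A
    _ = A.card * (A.card + 1) / 2 := by
        rw [Nat.choose_two_right, Nat.add_sub_cancel, Nat.mul_comm]

lemma exists_sumset_card (k : ℕ) (hk : 1 ≤ k) : ∀ t : ℕ, 2 * k - 1 ≤ t → t ≤ k * (k + 1) / 2 →
    ∃ A : Finset ℤ, A ⊆ Finset.Icc 0 (2 ^ k - 1) ∧ A.card = k ∧ (A + A).card = t := by
  induction k, hk using Nat.le_induction with
  | base =>
    intro t h1 h2
    norm_num at h1 h2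
    have ht : t = 1 := le_antisymm h2 h1
    subst ht
    refine ⟨{0}, by norm_num, rfl, ?_⟩
    rw [Finset.singleton_add_singleton]
    simp
  | succ k hk IH =>
    intro t h1 h2
    have hkpow : (k : ℤ) < 2 ^ k := by exact_mod_cast Nat.lt_two_pow_self (n := k)
    have hpow2 : (2 : ℤ) ^ (k + 1) = 2 * 2 ^ k := by ring
    by_cases ht : t ≤ 3 * k
    · -- small case : A = [0, k-1] ∪ {x}
      set x : ℤ := (t : ℤ) - k - 1 with hxdef
      have hx1 : (k : ℤ) ≤ x := by simp only [hxdef]; omega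
      have hx2 : x ≤ 2 * k - 1 := by simp only [hxdef]; omega
      set A : Finset ℤ := Finset.Icc 0 (k - 1) ∪ {x} with hA
      have hxn : x ∉ Finset.Icc (0 : ℤ) (k - 1) := by
        rw [Finset.mem_Icc]; omega
      have hdisj : Disjoint (Finset.Icc (0 : ℤ) (k - 1)) {x} :=
        Finset.disjoint_singleton_right.2 hxn
      have hcard : A.card = k + 1 := by
        rw [hA, Finset.card_union_of_disjoint hdisj, Int.card_Icc, Finset.card_singleton]
        omega
      have hsub : A ⊆ Finset.Icc 0 (2 ^ (k + 1) - 1) := by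
        intro a ha
        rw [hA, Finset.mem_union, Finset.mem_Icc, Finset.mem_singleton] at ha
        rw [Finset.mem_Icc]
        omega
      have hAA : A + A = Finset.Icc (0 : ℤ) (x + k - 1) ∪ {2 * x} := by
        apply Finset.Subset.antisymm
        · intro c hc
          obtain ⟨a, ha, b, hb, rfl⟩ := Finset.mem_add.1 hc
          rw [hA, Finset.mem_union, Finset.mem_Icc, Finset.mem_singleton] at ha hb
          rw [Finset.mem_union, Finset.mem_Icc, Finset.mem_singleton]
          omega
        · intro c hc
          rw [Finset.mem_union, Finset.mem_Icc, Finset.mem_singleton] at hc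
          rcases hc with ⟨hc0, hc1⟩ | rfl
          · by_cases h1 : c ≤ (k : ℤ) - 1
            · exact Finset.mem_add.2 ⟨0, by rw [hA]; simp [Finset.mem_Icc]; omega,
                c, by rw [hA, Finset.mem_union, Finset.mem_Icc]; left; omega, by ring⟩
            · by_cases h2 : c ≤ 2 * (k : ℤ) - 2
              · exact Finset.mem_add.2 ⟨(k : ℤ) - 1,
                  by rw [hA, Finset.mem_union, Finset.mem_Icc]; left; omega,
                  c - ((k : ℤ) - 1),
                  by rw [hA, Finset.mem_union, Finset.mem_Icc]; left; omega, by ring⟩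
              · exact Finset.mem_add.2 ⟨x,
                  by rw [hA, Finset.mem_union, Finset.mem_singleton]; right; rfl,
                  c - x,
                  by rw [hA, Finset.mem_union, Finset.mem_Icc]; left; omega, by ring⟩
          · exact Finset.mem_add.2 ⟨x,
              by rw [hA, Finset.mem_union, Finset.mem_singleton]; right; rfl,
              x, by rw [hA, Finset.mem_union, Finset.mem_singleton]; right; rfl, by ring⟩
      have hdisj2 : Disjoint (Finset.Icc (0 : ℤ) (x + k - 1)) ({2 * x} : Finset ℤ) := by
        rw [Finset.disjoint_singleton_right, Finset.mem_Icc]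
        omega
      refine ⟨A, hsub, hcard, ?_⟩
      rw [hAA, Finset.card_union_of_disjoint hdisj2, Int.card_Icc, Finset.card_singleton]
      simp only [hxdef]
      omega
    · -- big case : A = insert y A' with y = 2^(k+1) - 1
      have h2dvd : 2 ∣ k * (k + 1) := (Nat.even_mul_succ_self k).two_dvd
      have hprod : (k + 1) * (k + 1 + 1) = k * (k + 1) + 2 * (k + 1) := by ring
      have ht1' : 2 * k - 1 ≤ t - (k + 1) := by omega
      have ht2' : t - (k + 1) ≤ k * (k + 1) / 2 := by omega
      obtain ⟨A', hsub', hcard', hadd'⟩ := IH (t - (k + 1)) ht1' ht2'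
      set y : ℤ := 2 ^ (k + 1) - 1 with hy
      have hbound : ∀ a ∈ A', 0 ≤ a ∧ a ≤ 2 ^ k - 1 := fun a ha =>
        Finset.mem_Icc.1 (hsub' ha)
      have hyn : y ∉ A' := fun h => by have := hbound y h; omega
      set A : Finset ℤ := insert y A' with hA
      have hcard : A.card = k + 1 := by
        rw [hA, Finset.card_insert_of_notMem hyn, hcard']
      have hsub : A ⊆ Finset.Icc 0 (2 ^ (k + 1) - 1) := by
        rw [hA, Finset.insert_subset_iff]
        constructor
        · rw [Finset.mem_Icc]; omega
        · intro a ha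
          have := hbound a ha
          rw [Finset.mem_Icc]; omega
      have hAA : A + A = (A' + A') ∪ A'.image (fun a => y + a) ∪ {y + y} := by
        apply Finset.Subset.antisymm
        · intro c hc
          obtain ⟨a, ha, b, hb, rfl⟩ := Finset.mem_add.1 hc
          rw [hA, Finset.mem_insert] at ha hb
          rw [Finset.mem_union, Finset.mem_union, Finset.mem_singleton]
          rcases ha with rfl | ha
          · rcases hb with rfl | hb
            · right; rfl
            · left; right; exact Finset.mem_image.2 ⟨b, hb, rfl⟩
          · rcases hb with rfl | hb
            · left; right; exact Finset.mem_image.2 ⟨a, ha, by ring⟩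
            · left; left; exact Finset.add_mem_add ha hb
        · refine Finset.union_subset (Finset.union_subset ?_ ?_) ?_
          · exact Finset.add_subset_add (Finset.subset_insert _ _) (Finset.subset_insert _ _)
          · intro c hc
            obtain ⟨a, ha, rfl⟩ := Finset.mem_image.1 hc
            exact Finset.add_mem_add (Finset.mem_insert_self _ _)
              (Finset.mem_insert_of_mem ha)
          · intro c hc
            rw [Finset.mem_singleton] at hc
            subst hc
            exact Finset.add_mem_add (Finset.mem_insert_self _ _) (Finset.mem_insert_self _ _)
      have hd1 : Disjoint (A' + A') (A'.image (fun a => y + a)) := by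
        rw [Finset.disjoint_left]
        intro c hc hc'
        obtain ⟨a, ha, b, hb, rfl⟩ := Finset.mem_add.1 hc
        obtain ⟨a', ha', heq⟩ := Finset.mem_image.1 hc'
        have h1 := hbound a ha
        have h2 := hbound b hb
        have h3 := hbound a' ha'
        omega
      have hd2 : Disjoint ((A' + A') ∪ A'.image (fun a => y + a)) ({y + y} : Finset ℤ) := by
        rw [Finset.disjoint_singleton_right, Finset.mem_union]
        rintro (h | h)
        · obtain ⟨a, ha, b, hb, heq⟩ := Finset.mem_add.1 h
          have h1 := hbound a ha
          have h2 := hbound b hb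
          omega
        · obtain ⟨a, ha, heq⟩ := Finset.mem_image.1 h
          have h1 := hbound a ha
          omega
      have himg : (A'.image (fun a => y + a)).card = k := by
        rw [Finset.card_image_of_injective _ (add_right_injective y), hcard']
      refine ⟨A, hsub, hcard, ?_⟩
      rw [hAA, Finset.card_union_of_disjoint hd2, Finset.card_union_of_disjoint hd1,
        hadd', himg, Finset.card_singleton]
      omega

theorem stmt11 (k : ℕ) (hk : 1 ≤ k) :
    (∀ t : ℕ, 2 * k - 1 ≤ t → t ≤ k * (k + 1) / 2 →
      ∃ A : Finset ℤ, A ⊆ Finset.Icc 0 (2 ^ k - 1) ∧ A.card = k ∧ (A + A).card = t) ∧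
    {t : ℕ | ∃ A : Finset ℤ, A.card = k ∧ (A + A).card = t}
      = Set.Icc (2 * k - 1) (k * (k + 1) / 2) := by
  refine ⟨exists_sumset_card k hk, ?_⟩
  ext t
  simp only [Set.mem_setOf_eq, Set.mem_Icc]
  constructor
  · rintro ⟨A, hcard, rfl⟩
    have hne : A.Nonempty := Finset.card_pos.1 (by omega)
    have hlow := cauchy_davenport_add_of_linearOrder_isCancelAdd hne hne
    have hup := sumset_card_le A
    rw [hcard] at hlow hup
    exact ⟨by omega, hup⟩
  · rintro ⟨h1, h2⟩
    obtain ⟨A, _, hc, ha⟩ := exists_sumset_card k hk t h1 h2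
    exact ⟨A, hc, ha⟩
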